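/- Let M be an irreducible Markov chain on a countable state space V, let N be an M-boundary that is a realisation of the Poisson boundary of M, let s be a sharp harmonic function on V, and let ŝ ∈ L^∞(N) satisfy s(z) = ∫_N ŝ dν_z for every z ∈ V. Then for every z ∈ V, ŝ(η) ∈ {0, 1} for ν_z-almost every η ∈ N. -/

import Mathlib

open MeasureTheory Filter Set Topology
open scoped Classical

/-- An irreducible Markov chain on a countable state space `V`, given together with
its family of path-space laws `μ z` (the law of the chain started at `z`),
characterised on cylinder sets by the transition probabilities. -/
structure MarkovChain (V : Type*) [Countable V] [MeasurableSpace V] where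
  /-- transition probabilities -/
  p : V → V → ℝ
  p_nonneg : ∀ x y, 0 ≤ p x y
  p_row_sum : ∀ x, HasSum (p x) 1
  irred : ∀ x y : V, ∃ (n : ℕ) (w : ℕ → V),
    w 0 = x ∧ w n = y ∧ ∀ i < n, 0 < p (w i) (w (i + 1))
  /-- the law of the chain started at `z`, on the path space `ℕ → V` -/
  μ : V → Measure (ℕ → V)
  μ_prob : ∀ z, IsProbabilityMeasure (μ z)
  μ_cyl : ∀ (z : V) (n : ℕ) (w : ℕ → V),
    (μ z {ω : ℕ → V | ∀ i ≤ n, ω i = w i}).toReal =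
      if w 0 = z then ∏ i ∈ Finset.range n, p (w i) (w (i + 1)) else 0

variable {V : Type*} [Countable V] [MeasurableSpace V]

/-- `h : V → ℝ` is harmonic if `h x = ∑_y p x y * h y` for every `x`. -/
def IsHarmonic (M : MarkovChain V) (h : V → ℝ) : Prop :=
  ∀ x, HasSum (fun y => M.p x y * h y) (h x)

/-- The event `1^s` that the values of `s` along the trajectory converge to `1`. -/
def oneEvent (s : V → ℝ) : Set (ℕ → V) :=
  {ω | Tendsto (fun n => s (ω n)) atTop (𝓝 1)}

/-- The event `0^s` that the values of `s` along the trajectory converge to `0`. -/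
def zeroEvent (s : V → ℝ) : Set (ℕ → V) :=
  {ω | Tendsto (fun n => s (ω n)) atTop (𝓝 0)}

/-- A harmonic function `s : V → [0,1]` is sharp if, for every starting state,
the values of `s` along the trajectory of the chain converge to `0` or `1`
almost surely. -/
def IsSharp (M : MarkovChain V) (s : V → ℝ) : Prop :=
  IsHarmonic M s ∧ (∀ x, s x ∈ Set.Icc (0 : ℝ) 1) ∧
  ∀ z, ∀ᵐ ω ∂ M.μ z,
    Tendsto (fun n => s (ω n)) atTop (𝓝 0) ∨ Tendsto (fun n => s (ω n)) atTop (𝓝 1)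

/-- A tail event: a measurable event invariant under deleting the first step. -/
def IsTailEvent (A : Set (ℕ → V)) : Prop :=
  MeasurableSet A ∧ (fun ω : ℕ → V => fun n => ω (n + 1)) ⁻¹' A = A

/-- An `M`-boundary: a measurable space `N` with measures `ν z`, `z ∈ V`, and a
measurable, shift-invariant, measure-preserving map `f` from path space to `N`. -/
structure MBoundary (M : MarkovChain V) (N : Type*) [MeasurableSpace N] where
  ν : V → Measure N
  f : (ℕ → V) → N
  f_meas : Measurable f
  shift_inv : ∀ ω : ℕ → V, f (fun n => ω (n + 1)) = f ω
  meas_pres : ∀ (z : V) (X : Set N), MeasurableSet X → ν z X = M.μ z (f ⁻¹' X)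

/-- The `M`-boundary is faithful to a sharp harmonic function `s` if some measurable
`X ⊆ N` satisfies `μ_z (1^s △ f⁻¹ X) = 0` for every `z`. -/
def Faithful {N : Type*} [MeasurableSpace N] (M : MarkovChain V) (B : MBoundary M N)
    (s : V → ℝ) : Prop :=
  ∃ X : Set N, MeasurableSet X ∧ ∀ z, M.μ z (symmDiff (oneEvent s) (B.f ⁻¹' X)) = 0

/-- The `M`-boundary is a realisation of the Poisson boundary: every bounded harmonic
function is the integral of an essentially unique bounded measurable function on `N`,
and conversely integrating any bounded measurable function on `N` gives a bounded
harmonic function. -/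
def IsRealisation {N : Type*} [MeasurableSpace N] (M : MarkovChain V)
    (B : MBoundary M N) : Prop :=
  (∀ h : V → ℝ, IsHarmonic M h → (∃ C, ∀ x, |h x| ≤ C) →
    ∃ hhat : N → ℝ, Measurable hhat ∧ (∃ C, ∀ η, |hhat η| ≤ C) ∧
      (∀ z, h z = ∫ η, hhat η ∂ B.ν z) ∧
      (∀ g : N → ℝ, Measurable g → (∃ C, ∀ η, |g η| ≤ C) →
        (∀ z, h z = ∫ η, g η ∂ B.ν z) → ∀ z, hhat =ᵐ[B.ν z] g)) ∧
  (∀ g : N → ℝ, Measurable g → (∃ C, ∀ η, |g η| ≤ C) →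
    (∃ C, ∀ z, |∫ η, g η ∂ B.ν z| ≤ C) ∧ IsHarmonic M (fun z => ∫ η, g η ∂ B.ν z))


open scoped ENNReal
set_option linter.unusedSectionVars false

section Cyl
variable {S : Type*}

def cylW (n : ℕ) (w : ℕ → S) : Set (ℕ → S) := {ω | ∀ i ≤ n, ω i = w i}

noncomputable def prodPW (p : S → S → ℝ) (n : ℕ) (w : ℕ → S) : ℝ≥0∞ :=
  ∏ i ∈ Finset.range n, ENNReal.ofReal (p (w i) (w (i + 1)))

def extW (n : ℕ) (u : Fin (n + 1) → S) : ℕ → S := fun i => u ⟨min i n, by omega⟩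

lemma extW_le {n : ℕ} (u : Fin (n + 1) → S) {i : ℕ} (hi : i ≤ n) :
    extW n u i = u ⟨i, by omega⟩ := by
  simp [extW, Nat.min_eq_left hi]

lemma extW_fin {n : ℕ} (u : Fin (n + 1) → S) (i : Fin (n + 1)) :
    extW n u i = u i := by
  rw [extW_le u (by omega : (i : ℕ) ≤ n)]

lemma extW_zero {n : ℕ} (u : Fin (n + 1) → S) : extW n u 0 = u 0 := by
  rw [extW_le u (Nat.zero_le n), Fin.mk_zero]

lemma mem_cylW_ext {n : ℕ} (u : Fin (n + 1) → S) (ω : ℕ → S) :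
    ω ∈ cylW n (extW n u) ↔ ∀ i : Fin (n + 1), ω i = u i := by
  constructor
  · intro h i
    rw [h i (by omega : (i : ℕ) ≤ n), extW_fin]
  · intro h i hi
    rw [extW_le u hi]; exact h ⟨i, by omega⟩

lemma cylW_self (n : ℕ) (ω : ℕ → S) :
    ω ∈ cylW n (extW n (fun i : Fin (n+1) => ω i)) := by
  rw [mem_cylW_ext]; intro i; rfl

lemma cylW_disjoint {n : ℕ} {u u' : Fin (n + 1) → S} (h : u ≠ u') :
    Disjoint (cylW n (extW n u)) (cylW n (extW n u')) := by
  rw [Set.disjoint_left]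
  intro ω hω hω'
  rw [mem_cylW_ext] at hω hω'
  exact h (funext fun i => (hω i).symm.trans (hω' i))

end Cyl
set_option linter.unusedSectionVars false

section Sum1
variable {S : Type*} [Countable S]

lemma rowsum1 {p : S → S → ℝ} (hp0 : ∀ x y, 0 ≤ p x y) (hrow : ∀ x, HasSum (p x) 1)
    (x : S) : ∑' y, ENNReal.ofReal (p x y) = 1 := by
  rw [← ENNReal.ofReal_tsum_of_nonneg (hp0 x) (hrow x).summable, (hrow x).tsum_eq,
    ENNReal.ofReal_one]

lemma prodPW_snoc (p : S → S → ℝ) (n : ℕ) (v : Fin (n + 1) → S) (x : S) :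
    prodPW p (n + 1) (extW (n + 1) (Fin.snoc v x)) =
      prodPW p n (extW n v) * ENNReal.ofReal (p (v (Fin.last n)) x) := by
  have hext : ∀ j ≤ n, extW (n + 1) (Fin.snoc v x) j = extW n v j := by
    intro j hj
    rw [extW_le _ (by omega : j ≤ n + 1), extW_le _ hj]
    have : (⟨j, by omega⟩ : Fin (n + 2)) = Fin.castSucc ⟨j, by omega⟩ := rfl
    rw [this, Fin.snoc_castSucc]
  have hlast1 : extW (n + 1) (Fin.snoc v x) n = v (Fin.last n) := by
    rw [hext n le_rfl, extW_le _ le_rfl]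
    congr 1
  have hlast2 : extW (n + 1) (Fin.snoc v x) (n + 1) = x := by
    rw [extW_le _ le_rfl]
    have : (⟨n + 1, by omega⟩ : Fin (n + 2)) = Fin.last (n + 1) := rfl
    rw [this, Fin.snoc_last]
  unfold prodPW
  rw [Finset.prod_range_succ, hlast1, hlast2]
  congr 1
  refine Finset.prod_congr rfl fun i hi => ?_
  rw [Finset.mem_range] at hi
  rw [hext i (by omega), hext (i + 1) (by omega)]

lemma sum1 {p : S → S → ℝ} (hp0 : ∀ x y, 0 ≤ p x y) (hrow : ∀ x, HasSum (p x) 1) :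
    ∀ (n : ℕ) (y : S),
      ∑' u : Fin (n + 1) → S, (if u 0 = y then prodPW p n (extW n u) else 0) = 1 := by
  intro n
  induction n with
  | zero =>
    intro y
    have he := (Equiv.funUnique (Fin 1) S).symm.tsum_eq
      (f := fun u : Fin 1 → S => if u 0 = y then prodPW p 0 (extW 0 u) else 0)
    rw [← he]
    have : ∀ x : S, (if ((Equiv.funUnique (Fin 1) S).symm x) 0 = y
        then prodPW p 0 (extW 0 ((Equiv.funUnique (Fin 1) S).symm x)) else 0)
        = if x = y then 1 else 0 := by
      intro x
      simp [prodPW, Equiv.funUnique]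
    rw [tsum_congr this, tsum_ite_eq]
  | succ n ih =>
    intro y
    rw [← (Fin.snocEquiv (fun _ : Fin (n + 2) => S)).tsum_eq]
    rw [ENNReal.tsum_prod']
    rw [ENNReal.tsum_comm]
    have hterm : ∀ (v : Fin (n + 1) → S) (x : S),
        (if (Fin.snocEquiv (fun _ : Fin (n + 2) => S) (x, v)) 0 = y
          then prodPW p (n + 1) (extW (n + 1) (Fin.snocEquiv (fun _ : Fin (n + 2) => S) (x, v)))
          else 0)
        = if v 0 = y then prodPW p n (extW n v) * ENNReal.ofReal (p (v (Fin.last n)) x)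
          else 0 := by
      intro v x
      have h0 : (Fin.snocEquiv (fun _ : Fin (n + 2) => S) (x, v)) = Fin.snoc v x := rfl
      rw [h0]
      have h1 : (Fin.snoc v x : Fin (n+2) → S) 0 = v 0 := by
        have : (0 : Fin (n + 2)) = Fin.castSucc 0 := rfl
        rw [this, Fin.snoc_castSucc]
      rw [h1, prodPW_snoc]
    calc ∑' (v : Fin (n + 1) → S) (x : S),
          (if (Fin.snocEquiv (fun _ : Fin (n + 2) => S) (x, v)) 0 = y
            then prodPW p (n + 1) (extW (n + 1) (Fin.snocEquiv (fun _ : Fin (n + 2) => S) (x, v)))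
            else 0)
        = ∑' (v : Fin (n + 1) → S), (if v 0 = y then prodPW p n (extW n v) else 0) := by
          refine tsum_congr fun v => ?_
          rw [tsum_congr (hterm v)]
          by_cases h : v 0 = y
          · simp only [h, if_true, eq_self_iff_true, ENNReal.tsum_mul_left,
              rowsum1 hp0 hrow, mul_one]
          · simp [h]
      _ = 1 := ih y

end Sum1
section Dirty
variable {S : Type*} [Countable S] [MeasurableSpace S]

lemma cylW_null_of_ne {p : S → S → ℝ} {κ : Measure (ℕ → S)} {y : S}
    (hκ : ∀ (n : ℕ) (w : ℕ → S), κ (cylW n w) = if w 0 = y then prodPW p n w else 0) :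
    κ {ω : ℕ → S | ω 0 ≠ y} = 0 := by
  have hsub : {ω : ℕ → S | ω 0 ≠ y} ⊆ ⋃ (x : {x : S // x ≠ y}), cylW 0 (fun _ => x.1) := by
    intro ω hω
    refine Set.mem_iUnion.2 ⟨⟨ω 0, hω⟩, ?_⟩
    intro i hi
    rw [Nat.le_zero.1 hi]
  refine measure_mono_null hsub (measure_iUnion_null fun x => ?_)
  rw [hκ 0 (fun _ => x.1)]
  simp [x.2]

lemma cylW_nullMeasurable {p : S → S → ℝ} {κ : Measure (ℕ → S)} [IsProbabilityMeasure κ]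
    {y : S} (hp0 : ∀ x y, 0 ≤ p x y) (hrow : ∀ x, HasSum (p x) 1)
    (hκ : ∀ (n : ℕ) (w : ℕ → S), κ (cylW n w) = if w 0 = y then prodPW p n w else 0)
    (n : ℕ) (u : Fin (n + 1) → S) : NullMeasurableSet (cylW n (extW n u)) κ := by
  have hval : ∀ u' : Fin (n + 1) → S,
      κ (cylW n (extW n u')) = if u' 0 = y then prodPW p n (extW n u') else 0 := by
    intro u'; rw [hκ, extW_zero]
  by_cases h0 : u 0 = y
  swap
  · exact NullMeasurableSet.of_null (by rw [hval]; simp [h0])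
  · set a := κ (cylW n (extW n u)) with ha
    have hsum : ∑' u' : Fin (n + 1) → S, κ (cylW n (extW n u')) = 1 := by
      rw [tsum_congr hval]; exact sum1 hp0 hrow n y
    have key1 : a + (∑' u' : Fin (n + 1) → S,
        if u' = u then 0 else κ (cylW n (extW n u'))) = 1 := by
      rw [ha]
      rw [ENNReal.tsum_eq_add_tsum_ite (f := fun u' => κ (cylW n (extW n u'))) u] at hsum
      convert hsum using 4 with x
      by_cases hx : x = u <;> simp [hx]
    have hcompl : κ (cylW n (extW n u))ᶜ ≤ ∑' u' : Fin (n + 1) → S,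
        if u' = u then 0 else κ (cylW n (extW n u')) := by
      have hsub : (cylW n (extW n u))ᶜ ⊆ {ω : ℕ → S | ω 0 ≠ y} ∪
          ⋃ (u' : Fin (n + 1) → S), (if u' = u then ∅ else cylW n (extW n u')) := by
        intro ω hω
        by_cases hω0 : ω 0 = y
        · refine Or.inr (Set.mem_iUnion.2 ⟨fun i => ω i, ?_⟩)
          have hne : (fun i : Fin (n + 1) => ω i) ≠ u := by
            intro hc
            exact hω (by rw [← hc]; exact cylW_self n ω)
          rw [if_neg hne]
          exact cylW_self n ω
        · exact Or.inl hω0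
      calc κ (cylW n (extW n u))ᶜ
          ≤ κ ({ω : ℕ → S | ω 0 ≠ y}) + κ (⋃ (u' : Fin (n + 1) → S),
              (if u' = u then ∅ else cylW n (extW n u'))) :=
            le_trans (measure_mono hsub) (measure_union_le _ _)
        _ ≤ 0 + ∑' u' : Fin (n + 1) → S, κ (if u' = u then ∅ else cylW n (extW n u')) := by
            gcongr
            · exact le_of_eq (cylW_null_of_ne hκ)
            · exact measure_iUnion_le _
        _ = ∑' u' : Fin (n + 1) → S, if u' = u then 0 else κ (cylW n (extW n u')) := by
            rw [zero_add]
            refine tsum_congr fun u' => ?_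
            by_cases h : u' = u <;> simp [h]
    set H := toMeasurable κ (cylW n (extW n u)) with hH
    set H' := toMeasurable κ (cylW n (extW n u))ᶜ with hH'
    have hU : H ∪ H' = Set.univ := by
      rw [Set.eq_univ_iff_forall]
      intro ω
      by_cases hm : ω ∈ cylW n (extW n u)
      · exact Or.inl (subset_toMeasurable _ _ hm)
      · exact Or.inr (subset_toMeasurable _ _ hm)
    have hsum2 : κ (H ∪ H') + κ (H ∩ H') = κ H + κ H' :=
      measure_union_add_inter H (measurableSet_toMeasurable _ _)
    have hle1 : (1 : ℝ≥0∞) + κ (H ∩ H') ≤ 1 + 0 := by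
      rw [add_zero]
      calc (1 : ℝ≥0∞) + κ (H ∩ H') = κ (H ∪ H') + κ (H ∩ H') := by
            rw [hU, measure_univ]
        _ = κ H + κ H' := hsum2
        _ ≤ a + (∑' u' : Fin (n + 1) → S,
              if u' = u then 0 else κ (cylW n (extW n u'))) := by
            gcongr
            · exact le_of_eq (measure_toMeasurable _)
            · exact le_trans (le_of_eq (measure_toMeasurable _)) hcompl
        _ = 1 := key1
    have hint : κ (H ∩ H') = 0 :=
      le_antisymm ((ENNReal.add_le_add_iff_left ENNReal.one_ne_top).1 hle1) zero_le
    have haeq : H =ᵐ[κ] cylW n (extW n u) := by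
      rw [MeasureTheory.ae_eq_set]
      constructor
      · refine measure_mono_null (fun ω hω => ?_) hint
        exact ⟨hω.1, subset_toMeasurable _ _ hω.2⟩
      · rw [Set.diff_eq_empty.2 (subset_toMeasurable _ _)]
        exact measure_empty
    exact ((measurableSet_toMeasurable _ _).nullMeasurableSet).congr haeq

lemma pi_top_le_caratheodory {p : S → S → ℝ} {κ : Measure (ℕ → S)} [IsProbabilityMeasure κ]
    {y : S} (hp0 : ∀ x y, 0 ≤ p x y) (hrow : ∀ x, HasSum (p x) 1)
    (hκ : ∀ (n : ℕ) (w : ℕ → S), κ (cylW n w) = if w 0 = y then prodPW p n w else 0) :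
    (@MeasurableSpace.pi ℕ (fun _ => S) (fun _ => ⊤)) ≤ κ.toOuterMeasure.caratheodory := by
  have hcar : ∀ (n : ℕ) (u : Fin (n + 1) → S),
      MeasurableSet[κ.toOuterMeasure.caratheodory] (cylW n (extW n u)) := by
    intro n u
    rw [OuterMeasure.isCaratheodory_iff]
    intro t
    exact (measure_inter_add_diff₀ (μ := κ) t (cylW_nullMeasurable hp0 hrow hκ n u)).symm
  have heval : ∀ (i : ℕ) (t : Set S),
      MeasurableSet[κ.toOuterMeasure.caratheodory] ((fun ω : ℕ → S => ω i) ⁻¹' t) := by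
    intro i t
    have hset : (fun ω : ℕ → S => ω i) ⁻¹' t
        = ⋃ (u : {u : Fin (i + 1) → S // u ⟨i, i.lt_succ_self⟩ ∈ t}), cylW i (extW i u.1) := by
      ext ω
      constructor
      · intro hω
        exact Set.mem_iUnion.2 ⟨⟨fun j => ω j, hω⟩, cylW_self i ω⟩
      · intro hω
        obtain ⟨u, hu⟩ := Set.mem_iUnion.1 hω
        have h2 := (mem_cylW_ext u.1 ω).1 hu ⟨i, i.lt_succ_self⟩
        rw [Set.mem_preimage, h2]
        exact u.2
    rw [hset]
    exact MeasurableSet.iUnion fun u => hcar i u.1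
  have hpi : (@MeasurableSpace.pi ℕ (fun _ => S) (fun _ => ⊤))
      = ⨆ i : ℕ, MeasurableSpace.comap (fun ω : ℕ → S => ω i) ⊤ := rfl
  rw [hpi]
  refine iSup_le fun i => ?_
  intro s hs
  obtain ⟨t, -, rfl⟩ := MeasurableSpace.measurableSet_comap.1 hs
  exact heval i t

lemma pi_le_pi_top : (MeasurableSpace.pi : MeasurableSpace (ℕ → S))
    ≤ @MeasurableSpace.pi ℕ (fun _ => S) (fun _ => ⊤) := by
  have h1 : (MeasurableSpace.pi : MeasurableSpace (ℕ → S))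
      = ⨆ i : ℕ, MeasurableSpace.comap (fun ω : ℕ → S => ω i) ‹MeasurableSpace S› := rfl
  have h2 : (@MeasurableSpace.pi ℕ (fun _ => S) (fun _ => ⊤))
      = ⨆ i : ℕ, MeasurableSpace.comap (fun ω : ℕ → S => ω i) ⊤ := rfl
  rw [h1, h2]
  exact iSup_mono fun i => MeasurableSpace.comap_mono le_top

end Dirty

section Dirty2
variable {S : Type*} [Countable S] [MeasurableSpace S]

lemma toMeasure_pi_top_apply {κ : Measure (ℕ → S)}
    (hc : (@MeasurableSpace.pi ℕ (fun _ => S) (fun _ => ⊤)) ≤ κ.toOuterMeasure.caratheodory)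
    {A : Set (ℕ → S)} (hA : MeasurableSet[@MeasurableSpace.pi ℕ (fun _ => S) (fun _ => ⊤)] A) :
    (@OuterMeasure.toMeasure (ℕ → S) (@MeasurableSpace.pi ℕ (fun _ => S) (fun _ => ⊤))
      κ.toOuterMeasure hc) A = κ A := by
  rw [@MeasureTheory.toMeasure_apply (ℕ → S) (@MeasurableSpace.pi ℕ (fun _ => S) (fun _ => ⊤)) κ.toOuterMeasure hc A hA]
  rfl

end Dirty2
section Clean
variable {S : Type*} [Countable S] [mS : MeasurableSpace S] [DiscreteMeasurableSpace S]

lemma measurableSet_cylW (n : ℕ) (w : ℕ → S) : MeasurableSet (cylW n w) := by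
  have h : cylW n w = ⋂ (i : ℕ),
      (if i ≤ n then (fun ω : ℕ → S => ω i) ⁻¹' {w i} else Set.univ) := by
    ext ω
    simp only [cylW, Set.mem_setOf_eq, Set.mem_iInter]
    constructor
    · intro hω i
      by_cases hi : i ≤ n
      · simp [hi, hω i hi]
      · simp [hi]
    · intro hω i hi
      have := hω i
      rw [if_pos hi] at this
      simpa using this
  rw [h]
  refine MeasurableSet.iInter fun i => ?_
  by_cases hi : i ≤ n
  · rw [if_pos hi]
    exact measurable_pi_apply i (MeasurableSet.of_discrete)
  · rw [if_neg hi]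
    exact MeasurableSet.univ

lemma preimage_restr (n : ℕ) (t : Set (Fin (n + 1) → S)) :
    (fun ω (i : Fin (n + 1)) => ω i) ⁻¹' t = ⋃ (u : t), cylW n (extW n u.1) := by
  ext ω
  constructor
  · intro hω
    exact Set.mem_iUnion.2 ⟨⟨fun i => ω i, hω⟩, cylW_self n ω⟩
  · intro hω
    obtain ⟨u, hu⟩ := Set.mem_iUnion.1 hω
    have h2 : (fun i : Fin (n + 1) => ω i) = u.1 := funext fun i => (mem_cylW_ext u.1 ω).1 hu i
    rw [Set.mem_preimage, h2]
    exact u.2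

lemma measurable_restr (n : ℕ) :
    @Measurable (ℕ → S) (Fin (n + 1) → S) _ ⊤ (fun ω (i : Fin (n + 1)) => ω i) := by
  intro t _
  rw [preimage_restr n t]
  exact MeasurableSet.iUnion fun u => measurableSet_cylW _ _

def shiftn (n : ℕ) : (ℕ → S) → (ℕ → S) := fun ω i => ω (i + n)

lemma measurable_shiftn (n : ℕ) : Measurable (shiftn (S := S) n) :=
  measurable_pi_lambda _ fun i => measurable_pi_apply (i + n)

def spliceW (n : ℕ) (w w' : ℕ → S) : ℕ → S := fun i => if i ≤ n then w i else w' (i - n)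

lemma spliceW_le {n i : ℕ} (w w' : ℕ → S) (h : i ≤ n) : spliceW n w w' i = w i := if_pos h

lemma spliceW_zero (n : ℕ) (w w' : ℕ → S) : spliceW n w w' 0 = w 0 :=
  spliceW_le w w' (Nat.zero_le n)

lemma spliceW_shift {n : ℕ} {w w' : ℕ → S} (h : w' 0 = w n) (i : ℕ) :
    spliceW n w w' (i + n) = w' i := by
  rcases Nat.eq_zero_or_pos i with hi | hi
  · subst hi
    rw [zero_add, spliceW_le w w' le_rfl, ← h]
  · have h1 : ¬ (i + n ≤ n) := by omega
    rw [spliceW, if_neg h1]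
    congr 1
    omega

lemma shiftn_preimage_inter (n k : ℕ) (w w' : ℕ → S) :
    shiftn n ⁻¹' (cylW k w') ∩ cylW n w
      = if w' 0 = w n then cylW (n + k) (spliceW n w w') else ∅ := by
  split_ifs with h
  · ext ω
    constructor
    · rintro ⟨h1, h2⟩
      intro i hi
      by_cases hin : i ≤ n
      · rw [spliceW_le w w' hin]
        exact h2 i hin
      · have hik : i - n ≤ k := by omega
        have h3 := h1 (i - n) hik
        show ω i = spliceW n w w' i
        have h5 : spliceW n w w' i = w' (i - n) := if_neg hin
        rw [h5, ← h3]
        show ω i = ω ((i - n) + n)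
        congr 1
        omega
    · intro hmem
      constructor
      · intro i hik
        have h1 := hmem (i + n) (by omega)
        show ω (i + n) = w' i
        rw [h1, spliceW_shift h]
      · intro i hin
        have h1 := hmem i (by omega)
        rw [h1, spliceW_le w w' hin]
  · ext ω
    simp only [Set.mem_inter_iff, Set.mem_preimage, Set.mem_empty_iff_false, iff_false]
    rintro ⟨h1, h2⟩
    have ha : ω (0 + n) = w' 0 := h1 0 (Nat.zero_le k)
    have hb : ω n = w n := h2 n le_rfl
    rw [zero_add, hb] at ha
    exact h (ha.symm)

lemma prodPW_splice (p : S → S → ℝ) (n k : ℕ) (w w' : ℕ → S) (h : w' 0 = w n) :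
    prodPW p (n + k) (spliceW n w w') = prodPW p n w * prodPW p k w' := by
  unfold prodPW
  rw [Finset.prod_range_add]
  congr 1
  · refine Finset.prod_congr rfl fun i hi => ?_
    rw [Finset.mem_range] at hi
    rw [spliceW_le w w' (by omega), spliceW_le w w' (by omega)]
  · refine Finset.prod_congr rfl fun i hi => ?_
    have e1 : n + i = i + n := by omega
    have e2 : i + n + 1 = (i + 1) + n := by omega
    rw [e1, e2, spliceW_shift h, spliceW_shift h]

def cylSet (S : Type*) : Set (Set (ℕ → S)) :=
  {t | ∃ (k : ℕ) (u : Fin (k + 1) → S), t = cylW k (extW k u)}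

lemma cylW_inter_of_le {k k' : ℕ} (hk : k ≤ k') (u : Fin (k + 1) → S) (u' : Fin (k' + 1) → S)
    (hne : (cylW k (extW k u) ∩ cylW k' (extW k' u')).Nonempty) :
    cylW k (extW k u) ∩ cylW k' (extW k' u') = cylW k' (extW k' u') := by
  obtain ⟨ω₀, h₀, h₀'⟩ := hne
  refine Set.inter_eq_right.2 fun ω hω => ?_
  intro i hi
  rw [hω i (by omega), ← h₀' i (by omega), h₀ i hi]

lemma isPiSystem_cylSet : IsPiSystem (cylSet S) := by
  rintro s ⟨k, u, rfl⟩ t ⟨k', u', rfl⟩ hne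
  rcases le_total k k' with h | h
  · rw [cylW_inter_of_le h u u' hne]
    exact ⟨k', u', rfl⟩
  · rw [Set.inter_comm] at hne ⊢
    rw [cylW_inter_of_le h u' u hne]
    exact ⟨k, u, rfl⟩

lemma generateFrom_cylSet :
    (inferInstance : MeasurableSpace (ℕ → S)) = MeasurableSpace.generateFrom (cylSet S) := by
  refine le_antisymm ?_ ?_
  · have hpi : (inferInstance : MeasurableSpace (ℕ → S))
        = ⨆ i : ℕ, MeasurableSpace.comap (fun ω : ℕ → S => ω i) mS := rfl
    rw [hpi]
    refine iSup_le fun i => ?_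
    intro s hs
    obtain ⟨t, -, rfl⟩ := MeasurableSpace.measurableSet_comap.1 hs
    have hset : (fun ω : ℕ → S => ω i) ⁻¹' t
        = ⋃ (u : {u : Fin (i + 1) → S // u ⟨i, i.lt_succ_self⟩ ∈ t}), cylW i (extW i u.1) := by
      ext ω
      constructor
      · intro hω
        exact Set.mem_iUnion.2 ⟨⟨fun j => ω j, hω⟩, cylW_self i ω⟩
      · intro hω
        obtain ⟨u, hu⟩ := Set.mem_iUnion.1 hω
        have h2 := (mem_cylW_ext u.1 ω).1 hu ⟨i, i.lt_succ_self⟩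
        rw [Set.mem_preimage, h2]
        exact u.2
    rw [hset]
    exact MeasurableSet.iUnion fun u =>
      MeasurableSpace.measurableSet_generateFrom ⟨i, u.1, rfl⟩
  · refine MeasurableSpace.generateFrom_le ?_
    rintro t ⟨k, u, rfl⟩
    exact measurableSet_cylW _ _

end Clean
section Key
variable {S : Type*} [Countable S] [mS : MeasurableSpace S] [DiscreteMeasurableSpace S]

lemma key_lemma (p : S → S → ℝ)
    (m : S → Measure (ℕ → S)) (hprob : ∀ y, IsProbabilityMeasure (m y))
    (hcyl : ∀ (y : S) (n : ℕ) (w : ℕ → S),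
      m y (cylW n w) = if w 0 = y then prodPW p n w else 0)
    (s : S → ℝ) (G : (ℕ → S) → ℝ) (hG : Measurable G) (C : ℝ) (hGbd : ∀ ω, |G ω| ≤ C)
    (hshift : ∀ ω : ℕ → S, G (fun i => ω (i + 1)) = G ω)
    (hint : ∀ y, ∫ ω, G ω ∂ m y = s y) (z : S)
    (hsharp : ∀ᵐ ω ∂ m z, Tendsto (fun n => s (ω n)) atTop (𝓝 0)
      ∨ Tendsto (fun n => s (ω n)) atTop (𝓝 1)) :
    ∀ᵐ ω ∂ m z, G ω = 0 ∨ G ω = 1 := by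
  haveI := hprob z
  -- `G` is invariant under all shifts
  have hGshift : ∀ (n : ℕ) (ω : ℕ → S), G (shiftn n ω) = G ω := by
    intro n
    induction n with
    | zero =>
      intro ω
      have : shiftn 0 ω = ω := by funext i; simp [shiftn]
      rw [this]
    | succ n ih =>
      intro ω
      have h1 : shiftn (n + 1) ω = shiftn n (fun i => ω (i + 1)) := by
        funext i
        show ω (i + (n + 1)) = ω ((i + n) + 1)
        rfl
      rw [h1, ih, hshift]
  have hGint : ∀ y, Integrable G (m y) := by
    intro y
    haveI := hprob y
    exact (integrable_const C).mono' hG.aestronglyMeasurable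
      (Eventually.of_forall fun ω => by simpa [Real.norm_eq_abs] using hGbd ω)
  have hsbd : ∀ x : S, ‖s x‖ ≤ C := by
    intro x
    haveI := hprob x
    rw [← hint x]
    calc ‖∫ ω, G ω ∂ m x‖ ≤ C * ((m x) Set.univ).toReal :=
          norm_integral_le_of_norm_le_const
            (Eventually.of_forall fun ω => by simpa [Real.norm_eq_abs] using hGbd ω)
      _ = C := by simp
  -- the filtration of cylinder σ-algebras
  set ℱ : Filtration ℕ (inferInstance : MeasurableSpace (ℕ → S)) :=
    { seq := fun n => MeasurableSpace.comap (fun ω (i : Fin (n + 1)) => ω i) ⊤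
      mono' := by
        intro n n' hnn'
        show MeasurableSpace.comap (fun (ω : ℕ → S) (i : Fin (n + 1)) => ω i) ⊤
          ≤ MeasurableSpace.comap (fun (ω : ℕ → S) (i : Fin (n' + 1)) => ω i) ⊤
        have hco : (fun (ω : ℕ → S) (i : Fin (n + 1)) => ω i)
            = (fun (v : Fin (n' + 1) → S) (i : Fin (n + 1)) => v (Fin.castLE (by omega) i))
              ∘ (fun (ω : ℕ → S) (i : Fin (n' + 1)) => ω i) := rfl
        rw [hco, ← MeasurableSpace.comap_comp]
        exact MeasurableSpace.comap_mono le_top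
      le' := fun n => (measurable_restr n).comap_le } with hℱ
  have hℱn : ∀ n : ℕ, (ℱ n : MeasurableSpace (ℕ → S))
      = MeasurableSpace.comap (fun ω (i : Fin (n + 1)) => ω i) ⊤ := fun n => rfl
  -- the supremum of the filtration dominates the product σ-algebra
  have hsup : (inferInstance : MeasurableSpace (ℕ → S)) ≤ ⨆ n, (ℱ n : MeasurableSpace (ℕ → S)) := by
    have hpi : (inferInstance : MeasurableSpace (ℕ → S))
        = ⨆ i : ℕ, MeasurableSpace.comap (fun ω : ℕ → S => ω i) mS := rfl
    refine le_trans (le_of_eq hpi) (iSup_le fun i => ?_)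
    have h1 : (fun ω : ℕ → S => ω i)
        = (fun v : Fin (i + 1) → S => v ⟨i, i.lt_succ_self⟩)
          ∘ (fun ω (j : Fin (i + 1)) => ω j) := rfl
    calc MeasurableSpace.comap (fun ω : ℕ → S => ω i) mS
        ≤ MeasurableSpace.comap (fun ω : ℕ → S => ω i) ⊤ := MeasurableSpace.comap_mono le_top
      _ = MeasurableSpace.comap (fun ω (j : Fin (i + 1)) => ω j)
            (MeasurableSpace.comap (fun v : Fin (i + 1) → S => v ⟨i, i.lt_succ_self⟩) ⊤) := by
          rw [MeasurableSpace.comap_comp, ← h1]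
      _ ≤ MeasurableSpace.comap (fun ω (j : Fin (i + 1)) => ω j) ⊤ :=
          MeasurableSpace.comap_mono le_top
      _ ≤ ⨆ n, (ℱ n : MeasurableSpace (ℕ → S)) := by
          rw [← hℱn i]
          exact le_iSup (fun n => (ℱ n : MeasurableSpace (ℕ → S))) i
  -- the per-cylinder integral identity
  have hkey_int : ∀ (n : ℕ) (u : Fin (n + 1) → S),
      ∫ ω in cylW n (extW n u), G ω ∂ m z
        = (m z (cylW n (extW n u))).toReal * s (u ⟨n, n.lt_succ_self⟩) := by
    intro n u
    by_cases h0 : u 0 = z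
    swap
    · have hnull : m z (cylW n (extW n u)) = 0 := by
        rw [hcyl, extW_zero, if_neg h0]
      rw [hnull, Measure.restrict_eq_zero.2 hnull, integral_zero_measure]
      simp
    · set w := extW n u with hw
      set y := u ⟨n, n.lt_succ_self⟩ with hy
      haveI := hprob y
      have hw0 : w 0 = z := by rw [hw, extW_zero]; exact h0
      have hwn : w n = y := by rw [hw, extW_le u le_rfl]
      set ρ := Measure.map (shiftn n) ((m z).restrict (cylW n w)) with hρ
      haveI : IsFiniteMeasure ρ := by
        constructor
        rw [hρ, Measure.map_apply (measurable_shiftn n) MeasurableSet.univ,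
          Set.preimage_univ, Measure.restrict_apply MeasurableSet.univ, Set.univ_inter]
        exact measure_lt_top _ _
      have hρeq : ρ = (m z (cylW n w)) • m y := by
        refine ext_of_generate_finite (cylSet S) generateFrom_cylSet isPiSystem_cylSet ?_ ?_
        · rintro t ⟨k, v, rfl⟩
          set w' := extW k v with hw'
          rw [hρ, Measure.map_apply (measurable_shiftn n) (measurableSet_cylW _ _),
            Measure.restrict_apply ((measurable_shiftn n) (measurableSet_cylW _ _)),
            shiftn_preimage_inter, Measure.smul_apply, smul_eq_mul]
          by_cases hv : w' 0 = w n
          · rw [if_pos hv, hcyl, hcyl, hcyl]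
            have h00 : spliceW n w w' 0 = z := by rw [spliceW_zero]; exact hw0
            rw [if_pos h00, if_pos hw0, prodPW_splice p n k w w' hv]
            have hv' : w' 0 = y := by rw [hv, hwn]
            rw [if_pos hv']
          · rw [if_neg hv, hcyl, hcyl]
            have hv' : ¬ (w' 0 = y) := by rw [← hwn]; exact hv
            rw [if_neg hv', if_pos hw0]
            simp
        · rw [hρ, Measure.map_apply (measurable_shiftn n) MeasurableSet.univ,
            Set.preimage_univ, Measure.restrict_apply MeasurableSet.univ,
            Set.univ_inter, Measure.smul_apply, smul_eq_mul, measure_univ, mul_one]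
      have e1 : ∫ ω, G ω ∂ρ = (m z (cylW n w)).toReal * s y := by
        rw [hρeq, integral_smul_measure, hint y, smul_eq_mul]
      have e2 : ∫ ω, G ω ∂ρ = ∫ ω in cylW n w, G (shiftn n ω) ∂ m z := by
        rw [hρ]
        exact integral_map (measurable_shiftn n).aemeasurable hG.aestronglyMeasurable
      rw [show (fun ω => G (shiftn n ω)) = G from funext (hGshift n)] at e2
      rw [← e2, e1]
  -- the conditional expectation of G given ℱ n is ω ↦ s (ω n)
  have hφmeas : ∀ n : ℕ, @Measurable (ℕ → S) ℝ (ℱ n) _ (fun ω => s (ω n)) := by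
    intro n t ht
    exact MeasurableSpace.measurableSet_comap.2
      ⟨(fun v : Fin (n + 1) → S => s (v ⟨n, n.lt_succ_self⟩)) ⁻¹' t, trivial, rfl⟩
  have hφint : ∀ n, Integrable (fun ω : ℕ → S => s (ω n)) (m z) := by
    intro n
    refine (integrable_const C).mono'
      (((hφmeas n).mono (ℱ.le n) le_rfl).stronglyMeasurable.aestronglyMeasurable)
      (Eventually.of_forall fun ω => hsbd (ω n))
  have hcond : ∀ n : ℕ, (fun ω : ℕ → S => s (ω n)) =ᵐ[m z] (m z)[G | ℱ n] := by
    intro n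
    haveI : SigmaFinite ((m z).trim (ℱ.le n)) := inferInstance
    refine ae_eq_condExp_of_forall_setIntegral_eq (ℱ.le n) (hGint z)
      (fun A hA hfin => (hφint n).integrableOn) ?_ ?_
    · intro A hA hfin
      obtain ⟨t, -, rfl⟩ := MeasurableSpace.measurableSet_comap.1 hA
      rw [preimage_restr n t]
      have hdisj : Pairwise (Function.onFun Disjoint fun u : t => cylW n (extW n u.1)) :=
        fun u u' huu' => cylW_disjoint fun hc => huu' (Subtype.ext hc)
      rw [integral_iUnion (fun u => measurableSet_cylW _ _) hdisj
          (hφint n).integrableOn,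
        integral_iUnion (fun u => measurableSet_cylW _ _) hdisj (hGint z).integrableOn]
      refine tsum_congr fun u => ?_
      rw [hkey_int n u.1]
      rw [setIntegral_congr_fun (measurableSet_cylW _ _)
        (g := fun _ => s (u.1 ⟨n, n.lt_succ_self⟩))
        (fun ω hω => by rw [(mem_cylW_ext u.1 ω).1 hω ⟨n, n.lt_succ_self⟩]),
        setIntegral_const, smul_eq_mul, measureReal_def]
    · exact ((hφmeas n).stronglyMeasurable).aestronglyMeasurable
  -- Lévy's upward theorem
  have hGsm : StronglyMeasurable[⨆ n, (ℱ n : MeasurableSpace (ℕ → S))] G :=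
    (hG.mono hsup le_rfl).stronglyMeasurable
  have hlevy := (hGint z).tendsto_ae_condExp hGsm
  have hall : ∀ᵐ ω ∂ m z, ∀ n : ℕ, s (ω n) = ((m z)[G | ℱ n]) ω :=
    ae_all_iff.2 fun n => hcond n
  filter_upwards [hsharp, hlevy, hall] with ω hω hlim hn
  have htend : Tendsto (fun n => s (ω n)) atTop (𝓝 (G ω)) :=
    hlim.congr fun n => (hn n).symm
  rcases hω with h | h
  · exact Or.inl (tendsto_nhds_unique htend h)
  · exact Or.inr (tendsto_nhds_unique htend h)

end Key
section Main
variable {V : Type*} [Countable V] [MeasurableSpace V]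

lemma markov_cyl_ennreal (M : MarkovChain V) (y : V) (n : ℕ) (w : ℕ → V) :
    M.μ y (cylW n w) = if w 0 = y then prodPW M.p n w else 0 := by
  haveI := M.μ_prob y
  have h1 : M.μ y (cylW n w) = ENNReal.ofReal ((M.μ y (cylW n w)).toReal) :=
    (ENNReal.ofReal_toReal (measure_ne_top _ _)).symm
  have h2 := M.μ_cyl y n w
  rw [show {ω : ℕ → V | ∀ i ≤ n, ω i = w i} = cylW n w from rfl] at h2
  rw [h1, h2]
  split_ifs with h
  · unfold prodPW
    exact ENNReal.ofReal_prod_of_nonneg fun i _ => M.p_nonneg _ _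
  · exact ENNReal.ofReal_zero

end Main

/-- If `N` is a realisation of the Poisson boundary, `s` is a sharp
harmonic function and `shat ∈ L^∞(N)` represents it, then `shat ∈ {0,1}`
almost everywhere with respect to every `ν z`. -/
theorem sharp_representative_ae_zero_or_one {N : Type*} [MeasurableSpace N]
    (M : MarkovChain V) (B : MBoundary M N) (hreal : IsRealisation M B)
    (s : V → ℝ) (hs : IsSharp M s)
    (shat : N → ℝ) (hmeas : Measurable shat) (hbd : ∃ C, ∀ η, |shat η| ≤ C)
    (hrep : ∀ z, s z = ∫ η, shat η ∂ B.ν z) :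
    ∀ z, ∀ᵐ η ∂ B.ν z, shat η = 0 ∨ shat η = 1 := by
  classical
  obtain ⟨C, hC⟩ := hbd
  intro z
  have hdisc : @DiscreteMeasurableSpace V ⊤ :=
    @DiscreteMeasurableSpace.mk V ⊤ (fun _ => MeasurableSpace.measurableSet_top)
  set G : (ℕ → V) → ℝ := fun ω => shat (B.f ω) with hGdef
  have hGm : Measurable G := hmeas.comp B.f_meas
  have hle : (MeasurableSpace.pi : MeasurableSpace (ℕ → V))
      ≤ @MeasurableSpace.pi ℕ (fun _ => V) (fun _ => ⊤) := pi_le_pi_top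
  have hκ : ∀ (y : V) (n : ℕ) (w : ℕ → V),
      M.μ y (cylW n w) = if w 0 = y then prodPW M.p n w else 0 := markov_cyl_ennreal M
  have hcarat : ∀ y : V, (@MeasurableSpace.pi ℕ (fun _ => V) (fun _ => ⊤))
      ≤ (M.μ y).toOuterMeasure.caratheodory := by
    intro y
    haveI := M.μ_prob y
    exact pi_top_le_caratheodory M.p_nonneg M.p_row_sum (hκ y)
  set μhat : V → @Measure (ℕ → V) (@MeasurableSpace.pi ℕ (fun _ => V) (fun _ => ⊤)) :=
    fun y => @OuterMeasure.toMeasure (ℕ → V) (@MeasurableSpace.pi ℕ (fun _ => V) (fun _ => ⊤))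
      (M.μ y).toOuterMeasure (hcarat y) with hμhat
  have hval : ∀ (y : V) (A : Set (ℕ → V)),
      MeasurableSet[@MeasurableSpace.pi ℕ (fun _ => V) (fun _ => ⊤)] A → μhat y A = M.μ y A :=
    fun y A hA => toMeasure_pi_top_apply (hcarat y) hA
  have hprob' : ∀ y, IsProbabilityMeasure (μhat y) := by
    intro y
    haveI := M.μ_prob y
    exact ⟨by rw [hval y Set.univ MeasurableSet.univ]; exact measure_univ⟩
  have hcyl' : ∀ (y : V) (n : ℕ) (w : ℕ → V),
      μhat y (cylW n w) = if w 0 = y then prodPW M.p n w else 0 := by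
    intro y n w
    rw [hval y _ (@measurableSet_cylW V _ ⊤ hdisc n w),
      hκ]
  have hGm' : @Measurable (ℕ → V) ℝ (@MeasurableSpace.pi ℕ (fun _ => V) (fun _ => ⊤)) _ G :=
    hGm.mono hle le_rfl
  have hGbd' : ∀ ω, |G ω| ≤ C := fun ω => hC _
  have hshift' : ∀ ω : ℕ → V, G (fun i => ω (i + 1)) = G ω := by
    intro ω
    show shat (B.f fun i => ω (i + 1)) = shat (B.f ω)
    rw [B.shift_inv ω]
  have htrim : ∀ y, M.μ y = (μhat y).trim hle := by
    intro y
    refine Measure.ext fun A hA => ?_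
    rw [MeasureTheory.trim_measurableSet_eq hle hA, hval y A (hle A hA)]
  have hint' : ∀ y, ∫ ω, G ω ∂ μhat y = s y := by
    intro y
    have hν : B.ν y = Measure.map B.f (M.μ y) :=
      Measure.ext fun X hX => by
        rw [Measure.map_apply B.f_meas hX]; exact B.meas_pres y X hX
    have h2 : ∫ ω, G ω ∂ M.μ y = s y := by
      calc ∫ ω, G ω ∂ M.μ y
          = ∫ x, shat x ∂ (Measure.map B.f (M.μ y)) :=
            (integral_map B.f_meas.aemeasurable hmeas.aestronglyMeasurable).symm
        _ = ∫ x, shat x ∂ B.ν y := by rw [← hν]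
        _ = s y := (hrep y).symm
    calc ∫ ω, G ω ∂ μhat y
        = ∫ ω, G ω ∂ ((μhat y).trim hle) := integral_trim hle hGm.stronglyMeasurable
      _ = ∫ ω, G ω ∂ M.μ y := by rw [← htrim y]
      _ = s y := h2
  have hsharp' : ∀ᵐ ω ∂ μhat z, Tendsto (fun n => s (ω n)) atTop (𝓝 0)
      ∨ Tendsto (fun n => s (ω n)) atTop (𝓝 1) := by
    have h0 := hs.2.2 z
    rw [ae_iff] at h0 ⊢
    refine le_antisymm ?_ zero_le
    calc μhat z {ω | ¬(Tendsto (fun n => s (ω n)) atTop (𝓝 0)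
            ∨ Tendsto (fun n => s (ω n)) atTop (𝓝 1))}
        ≤ μhat z (toMeasurable (M.μ z) {ω | ¬(Tendsto (fun n => s (ω n)) atTop (𝓝 0)
            ∨ Tendsto (fun n => s (ω n)) atTop (𝓝 1))}) :=
          measure_mono (subset_toMeasurable _ _)
      _ = M.μ z (toMeasurable (M.μ z) {ω | ¬(Tendsto (fun n => s (ω n)) atTop (𝓝 0)
            ∨ Tendsto (fun n => s (ω n)) atTop (𝓝 1))}) :=
          hval z _ (hle _ (measurableSet_toMeasurable _ _))
      _ = M.μ z {ω | ¬(Tendsto (fun n => s (ω n)) atTop (𝓝 0)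
            ∨ Tendsto (fun n => s (ω n)) atTop (𝓝 1))} := measure_toMeasurable _
      _ = 0 := h0
  have hae := @key_lemma V _ ⊤ hdisc M.p μhat hprob'
    hcyl' s G hGm' C hGbd' hshift' hint' z hsharp'
  have hsetR : MeasurableSet {x : ℝ | ¬(x = 0 ∨ x = 1)} := by
    have h : {x : ℝ | ¬(x = 0 ∨ x = 1)} = (({0} : Set ℝ) ∪ {1})ᶜ := by
      ext x
      simp [not_or, and_comm]
    rw [h]
    exact ((measurableSet_singleton 0).union (measurableSet_singleton 1)).compl
  rw [ae_iff] at hae ⊢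
  have hpre : {η : N | ¬(shat η = 0 ∨ shat η = 1)} = shat ⁻¹' {x : ℝ | ¬(x = 0 ∨ x = 1)} := rfl
  rw [hpre, B.meas_pres z _ (hmeas hsetR)]
  have hfpre : B.f ⁻¹' (shat ⁻¹' {x : ℝ | ¬(x = 0 ∨ x = 1)})
      = {ω : ℕ → V | ¬(G ω = 0 ∨ G ω = 1)} := rfl
  rw [hfpre]
  have hfin : M.μ z {ω : ℕ → V | ¬(G ω = 0 ∨ G ω = 1)}
      = μhat z {ω : ℕ → V | ¬(G ω = 0 ∨ G ω = 1)} :=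
    (hval z {ω : ℕ → V | ¬(G ω = 0 ∨ G ω = 1)} (hle _ (hGm hsetR))).symm
  rw [hfin]
  exact hae
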